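/- arXiv:2408.11653 — 2 statements merged into one kernel-verified Lean document; each statement's English description precedes it below -/
import Mathlib

section
/- Let Λ ⊆ ℝⁿ be a full-rank lattice (a discrete additive subgroup spanning ℝⁿ) such that Λ is generated as a group by vectors of Euclidean length at most r. Then for every w ∈ ℝⁿ there exists λ ∈ Λ with |λ - w| ≤ (√n / 2)·r. -/
set_option maxHeartbeats 800000

open Submodule RealInnerProductSpace

lemma auxlist {n : ℕ} (r : ℝ) :
    ∀ (L : List (EuclideanSpace ℝ (Fin n))), (∀ v ∈ L, ‖v‖ ≤ r) →
    ∀ w ∈ Submodule.span ℝ {x | x ∈ L},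
    ∃ l ∈ AddSubgroup.closure {x | x ∈ L}, ‖l - w‖ ^ 2 ≤ (L.length / 4 : ℝ) * r ^ 2 := by
  intro L
  induction L with
  | nil =>
    intro _ w hw
    have he : ({x | x ∈ ([] : List (EuclideanSpace ℝ (Fin n)))} : Set _) = ∅ := by
      ext x; simp
    rw [he, Submodule.span_empty, Submodule.mem_bot] at hw
    refine ⟨0, AddSubgroup.zero_mem _, by simp [hw]⟩
  | cons v L ih =>
    intro hnorm w hw
    have hS : ({x | x ∈ v :: L} : Set _) = insert v {x | x ∈ L} := by
      ext x; simp
    rw [hS] at hw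
    rw [Submodule.mem_span_insert] at hw
    obtain ⟨a, y, hy, rfl⟩ := hw
    set V' : Submodule ℝ (EuclideanSpace ℝ (Fin n)) := Submodule.span ℝ {x | x ∈ L} with hV'
    set P := orthogonalProjection V' with hP
    set u : EuclideanSpace ℝ (Fin n) := v - P v with hu
    have hu_orth : u ∈ V'ᗮ := Submodule.sub_starProjection_mem_orthogonal (K := V') v
    set m : ℤ := round a with hm
    set z : EuclideanSpace ℝ (Fin n) := (a - m) • (P v : EuclideanSpace ℝ (Fin n)) + y with hz
    have hzV : z ∈ V' := V'.add_mem (V'.smul_mem _ (P v).2) hy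
    obtain ⟨l', hl', hl'2⟩ := ih (fun x hx => hnorm x (List.mem_cons_of_mem _ hx)) z hzV
    refine ⟨l' + (m : ℤ) • v, ?_, ?_⟩
    · apply AddSubgroup.add_mem
      · exact AddSubgroup.closure_mono (fun x hx => List.mem_cons_of_mem _ hx) hl'
      · refine AddSubgroup.zsmul_mem _ (AddSubgroup.subset_closure ?_) m
        exact List.mem_cons_self
    · have key : l' + (m : ℤ) • v - (a • v + y) = (l' - z) + (-(a - m)) • u := by
        simp only [hz, hu]
        module
      have hl'V : l' ∈ V' := by
        have : AddSubgroup.closure {x | x ∈ L} ≤ V'.toAddSubgroup := by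
          rw [AddSubgroup.closure_le]
          exact Submodule.subset_span
        exact this hl'
      have horth : @inner ℝ _ _ (l' - z) ((-(a - m)) • u) = 0 := by
        apply Submodule.inner_right_of_mem_orthogonal (V'.sub_mem hl'V hzV)
        exact V'ᗮ.smul_mem _ hu_orth
      rw [key, norm_add_sq_real, horth]
      have hur : ‖u‖ ^ 2 ≤ r ^ 2 := by
        have h1 : @inner ℝ _ _ ((P v : EuclideanSpace ℝ (Fin n))) u = 0 :=
          Submodule.inner_right_of_mem_orthogonal (P v).2 hu_orth
        have h2 : (v : EuclideanSpace ℝ (Fin n)) = (P v : EuclideanSpace ℝ (Fin n)) + u := by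
          simp [hu]
        have h3 : ‖v‖ ^ 2 = ‖(P v : EuclideanSpace ℝ (Fin n))‖ ^ 2 + ‖u‖ ^ 2 := by
          conv_lhs => rw [h2]
          rw [norm_add_sq_real, h1]; ring
        have h4 : ‖v‖ ≤ r := hnorm v List.mem_cons_self
        nlinarith [norm_nonneg v, sq_nonneg ‖(P v : EuclideanSpace ℝ (Fin n))‖]
      have habs : |a - (m : ℝ)| ≤ 1 / 2 := abs_sub_round a
      have h5 : ‖(-(a - m)) • u‖ ^ 2 ≤ (1 / 4) * r ^ 2 := by
        rw [norm_smul, mul_pow]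
        have hc : ‖(-(a - (m : ℝ)))‖ ≤ 1 / 2 := by rw [Real.norm_eq_abs, abs_neg]; exact habs
        have hc2 : ‖(-(a - (m : ℝ)))‖ ^ 2 ≤ 1 / 4 := by
          nlinarith [norm_nonneg (-(a - (m : ℝ)))]
        have := mul_le_mul hc2 hur (sq_nonneg ‖u‖) (by norm_num : (0:ℝ) ≤ 1/4)
        linarith
      have hlen : ((v :: L).length : ℝ) = L.length + 1 := by simp
      rw [hlen]
      nlinarith [hl'2]

/-- If a full-rank lattice `Λ ⊆ ℝⁿ` is generated as a group by vectors of Euclidean length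
at most `r`, then every `w ∈ ℝⁿ` is within distance `(√n / 2)·r` of a lattice point. -/
theorem stmt2 {n : ℕ} (r : ℝ)
    (Λ : AddSubgroup (EuclideanSpace ℝ (Fin n)))
    (hdisc : DiscreteTopology Λ)
    (hspan : Submodule.span ℝ (Λ : Set (EuclideanSpace ℝ (Fin n))) = ⊤)
    (hgen : AddSubgroup.closure {v : EuclideanSpace ℝ (Fin n) | v ∈ Λ ∧ ‖v‖ ≤ r} = Λ)
    (w : EuclideanSpace ℝ (Fin n)) :
    ∃ l ∈ Λ, ‖l - w‖ ≤ (Real.sqrt n / 2) * r := by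
  classical
  rcases Nat.eq_zero_or_pos n with hn | hn
  · subst hn
    refine ⟨0, Λ.zero_mem, ?_⟩
    have h0 : (0 : EuclideanSpace ℝ (Fin 0)) - w = 0 := Subsingleton.elim _ _
    simp [h0]
  · haveI : Nonempty (Fin n) := ⟨⟨0, hn⟩⟩
    set S : Set (EuclideanSpace ℝ (Fin n)) := {v | v ∈ Λ ∧ ‖v‖ ≤ r} with hSdef
    have hΛsub : (Λ : Set (EuclideanSpace ℝ (Fin n))) ⊆ (Submodule.span ℝ S : Set _) := by
      intro x hx
      have hx' : x ∈ AddSubgroup.closure S := by rw [hgen]; exact hx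
      have hle : AddSubgroup.closure S ≤ (Submodule.span ℝ S).toAddSubgroup := by
        rw [AddSubgroup.closure_le]; exact Submodule.subset_span
      exact hle hx'
    have hspanS : Submodule.span ℝ S = ⊤ := by
      rw [eq_top_iff, ← hspan]
      exact Submodule.span_le.mpr hΛsub
    obtain ⟨t, htS, htspan, htli⟩ := exists_linearIndependent ℝ S
    rw [hspanS] at htspan
    have htfin : t.Finite := htli.setFinite
    -- r is nonnegative
    have hr : 0 ≤ r := by
      have hne : t.Nonempty := by
        by_contra h
        rw [Set.not_nonempty_iff_eq_empty] at h
        rw [h, Submodule.span_empty] at htspan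
        exact absurd htspan (by simp [bot_ne_top])
      obtain ⟨v, hv⟩ := hne
      exact le_trans (norm_nonneg v) (htS hv).2
    set L : List (EuclideanSpace ℝ (Fin n)) := htfin.toFinset.toList with hL
    have hset : {x | x ∈ L} = t := by
      ext x; simp [hL, Set.Finite.mem_toFinset]
    have hlen : L.length ≤ n := by
      have h1 : L.length = htfin.toFinset.card := Finset.length_toList _
      have h2 : htfin.toFinset.card ≤ Module.finrank ℝ (EuclideanSpace ℝ (Fin n)) := by
        apply LinearIndependent.finset_card_le_finrank
        have h3 := htli.comp (fun x : htfin.toFinset => (⟨x.1, (Set.Finite.mem_toFinset htfin).mp x.2⟩ : t))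
          (fun a b hab => Subtype.ext (by simpa using congrArg Subtype.val hab))
        simpa [Function.comp_def] using h3
      rw [h1]
      simpa [finrank_euclideanSpace_fin] using h2
    have hnorms : ∀ v ∈ L, ‖v‖ ≤ r := by
      intro v hv
      have : v ∈ t := by rw [← hset]; exact hv
      exact (htS this).2
    have hwmem : w ∈ Submodule.span ℝ {x | x ∈ L} := by
      rw [hset, htspan]; trivial
    obtain ⟨l, hl, hl2⟩ := auxlist r L hnorms w hwmem
    refine ⟨l, ?_, ?_⟩
    · have : AddSubgroup.closure {x | x ∈ L} ≤ Λ := by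
        rw [← hgen]
        exact AddSubgroup.closure_mono (by rw [hset]; exact htS)
      exact this hl
    · have hs : Real.sqrt n ^ 2 = n := Real.sq_sqrt (Nat.cast_nonneg n)
      have hlenR : (L.length : ℝ) ≤ n := by exact_mod_cast hlen
      have h1 : ‖l - w‖ ^ 2 ≤ (Real.sqrt n / 2 * r) ^ 2 := by
        nlinarith [sq_nonneg r, hl2, hlenR, hs]
      have hrr : 0 ≤ Real.sqrt n / 2 * r :=
        mul_nonneg (div_nonneg (Real.sqrt_nonneg _) (by norm_num)) hr
      calc ‖l - w‖ = Real.sqrt (‖l - w‖ ^ 2) := (Real.sqrt_sq (norm_nonneg _)).symm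
        _ ≤ Real.sqrt ((Real.sqrt n / 2 * r) ^ 2) := Real.sqrt_le_sqrt h1
        _ = Real.sqrt n / 2 * r := Real.sqrt_sq hrr
end

section
/- Let Λ ⊆ ℝⁿ be a full-rank lattice, and suppose the closed ball B_r(0) contains n linearly independent vectors of Λ. Then Λ is generated as a group by its elements of length at most bₙ·r, where bₙ = max(1, √n/2). -/
open RealInnerProductSpace

/-- Babai nearest-plane bound: any point of the real span of `k` vectors of norm `≤ r`
is within distance `√k · r / 2` (squared: `k r²/4`) of the group generated by them. -/
lemma key_nearest {E : Type*} [NormedAddCommGroup E] [InnerProductSpace ℝ E] (r : ℝ) :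
    ∀ (k : ℕ) (v : Fin k → E), (∀ i, ‖v i‖ ≤ r) →
      ∀ x ∈ Submodule.span ℝ (Set.range v),
        ∃ y ∈ AddSubgroup.closure (Set.range v), ‖x - y‖ ^ 2 ≤ k * r ^ 2 / 4 := by
  intro k
  induction k with
  | zero =>
    intro v hv x hx
    refine ⟨0, zero_mem _, ?_⟩
    have : Set.range v = ∅ := Set.range_eq_empty v
    rw [this, Submodule.span_empty, Submodule.mem_bot] at hx
    simp [hx]
  | succ k ih =>
    intro v hv x hx
    set w' : Fin k → E := v ∘ Fin.castSucc with hw'def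
    set V : Submodule ℝ E := Submodule.span ℝ (Set.range w') with hVdef
    haveI : FiniteDimensional ℝ V := FiniteDimensional.span_of_finite ℝ (Set.finite_range _)
    obtain ⟨c, hc⟩ := (Submodule.mem_span_range_iff_exists_fun ℝ).mp hx
    rw [Fin.sum_univ_castSucc] at hc
    set w : E := ∑ i : Fin k, c i.castSucc • v i.castSucc with hwdef
    have hwV : w ∈ V :=
      Submodule.sum_mem _ fun i _ =>
        Submodule.smul_mem _ _ (Submodule.subset_span ⟨i, rfl⟩)
    set p : E := (Submodule.orthogonalProjection V (v (Fin.last k)) : E) with hpdef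
    have hpV : p ∈ V := (Submodule.orthogonalProjection V (v (Fin.last k))).2
    set g : E := v (Fin.last k) - p with hgdef
    have hgo : g ∈ Vᗮ := Submodule.sub_starProjection_mem_orthogonal (K := V) _
    have hpg : @inner ℝ _ _ p g = 0 := hgo p hpV
    have hgnorm : ‖g‖ ≤ r := by
      have hvpg : v (Fin.last k) = p + g := by rw [hgdef]; abel
      have hsq : ‖v (Fin.last k)‖ ^ 2 = ‖p‖ ^ 2 + ‖g‖ ^ 2 := by
        rw [hvpg, norm_add_sq_real, hpg]; ring
      nlinarith [hv (Fin.last k), norm_nonneg p, norm_nonneg g,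
        norm_nonneg (v (Fin.last k))]
    have hr0 : 0 ≤ r := le_trans (norm_nonneg g) hgnorm
    set cl : ℝ := c (Fin.last k) with hcldef
    set m : ℤ := round cl with hmdef
    set x₁ : E := w + (cl - m) • p with hx₁def
    have hx₁V : x₁ ∈ V := Submodule.add_mem _ hwV (Submodule.smul_mem _ _ hpV)
    obtain ⟨y₁, hy₁, hy₁n⟩ := ih w' (fun i => hv _) x₁ hx₁V
    have hy₁V : y₁ ∈ V := by
      have hle : AddSubgroup.closure (Set.range w') ≤ V.toAddSubgroup :=
        (AddSubgroup.closure_le _).mpr Submodule.subset_span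
      exact hle hy₁
    refine ⟨y₁ + (m : ℝ) • v (Fin.last k), ?_, ?_⟩
    · refine add_mem ?_ ?_
      · exact AddSubgroup.closure_mono
          (Set.range_comp_subset_range Fin.castSucc v) hy₁
      · have hmem : m • v (Fin.last k) ∈ AddSubgroup.closure (Set.range v) :=
          AddSubgroup.zsmul_mem _
            (AddSubgroup.subset_closure (Set.mem_range_self (Fin.last k))) m
        rwa [← Int.cast_smul_eq_zsmul ℝ] at hmem
    · have hsplit : x - (y₁ + (m : ℝ) • v (Fin.last k)) = (x₁ - y₁) + (cl - m) • g := by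
        rw [← hc, hx₁def, hgdef]
        simp only [smul_sub, sub_smul]
        abel
      have hinner : @inner ℝ _ _ (x₁ - y₁) ((cl - m) • g) = 0 := by
        rw [real_inner_smul_right]
        rw [hgo (x₁ - y₁) (Submodule.sub_mem _ hx₁V hy₁V), mul_zero]
      rw [hsplit, norm_add_sq_real, hinner]
      have h1 : ‖(cl - (m : ℝ)) • g‖ = |cl - (m : ℝ)| * ‖g‖ := by
        rw [norm_smul, Real.norm_eq_abs]
      rw [h1]
      have h2 : |cl - (m : ℝ)| ≤ 1 / 2 := abs_sub_round cl
      have h3 : 0 ≤ |cl - (m : ℝ)| := abs_nonneg _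
      have h4 : 0 ≤ ‖g‖ := norm_nonneg g
      have h5 : |cl - (m : ℝ)| * ‖g‖ ≤ 1 / 2 * r :=
        mul_le_mul h2 hgnorm h4 (by norm_num)
      have h6 : (|cl - (m : ℝ)| * ‖g‖) ^ 2 ≤ (1 / 2 * r) ^ 2 :=
        pow_le_pow_left₀ (mul_nonneg h3 h4) h5 2
      push_cast
      nlinarith [hy₁n, h6]

/-- If the closed ball of radius `r` contains `n` linearly independent vectors of a full-rank
lattice `Λ ⊆ ℝⁿ`, then `Λ` is generated as a group by its elements of length at most
`bₙ·r`, where `bₙ = max 1 (√n / 2)`. -/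
theorem stmt3 {n : ℕ} (r : ℝ)
    (Λ : AddSubgroup (EuclideanSpace ℝ (Fin n)))
    (hdisc : DiscreteTopology Λ)
    (hspan : Submodule.span ℝ (Λ : Set (EuclideanSpace ℝ (Fin n))) = ⊤)
    (v : Fin n → EuclideanSpace ℝ (Fin n))
    (hvΛ : ∀ i, v i ∈ Λ) (hvr : ∀ i, ‖v i‖ ≤ r)
    (hli : LinearIndependent ℝ v) :
    AddSubgroup.closure
      {x : EuclideanSpace ℝ (Fin n) | x ∈ Λ ∧ ‖x‖ ≤ max 1 (Real.sqrt n / 2) * r} = Λ := by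
  apply le_antisymm
  · exact (AddSubgroup.closure_le _).mpr fun x hx => hx.1
  · rcases Nat.eq_zero_or_pos n with hn | hn
    · intro x hx
      have hsub : Subsingleton (EuclideanSpace ℝ (Fin n)) := by
        subst hn
        exact ⟨fun a b => by ext i; exact i.elim0⟩
      have : x = 0 := Subsingleton.elim x 0
      rw [this]
      exact zero_mem _
    · have hr0 : 0 ≤ r := le_trans (norm_nonneg (v ⟨0, hn⟩)) (hvr ⟨0, hn⟩)
      have hspanv : Submodule.span ℝ (Set.range v) = ⊤ := by
        haveI : Nonempty (Fin n) := ⟨⟨0, hn⟩⟩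
        apply hli.span_eq_top_of_card_eq_finrank
        simp [finrank_euclideanSpace_fin]
      intro x hx
      have hxspan : x ∈ Submodule.span ℝ (Set.range v) := by rw [hspanv]; trivial
      obtain ⟨y, hy, hyn⟩ := key_nearest r n v hvr x hxspan
      have hsub : Set.range v ⊆
          {z : EuclideanSpace ℝ (Fin n) | z ∈ Λ ∧ ‖z‖ ≤ max 1 (Real.sqrt n / 2) * r} := by
        rintro z ⟨i, rfl⟩
        refine ⟨hvΛ i, le_trans (hvr i) ?_⟩
        nlinarith [le_max_left 1 (Real.sqrt n / 2)]
      have hyC : y ∈ AddSubgroup.closure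
          {z : EuclideanSpace ℝ (Fin n) | z ∈ Λ ∧ ‖z‖ ≤ max 1 (Real.sqrt n / 2) * r} :=
        AddSubgroup.closure_mono hsub hy
      have hyΛ : y ∈ Λ := by
        have : AddSubgroup.closure (Set.range v) ≤ Λ :=
          (AddSubgroup.closure_le _).mpr (by rintro z ⟨i, rfl⟩; exact hvΛ i)
        exact this hy
      have hd : x - y ∈ Λ := sub_mem hx hyΛ
      have hdn : ‖x - y‖ ≤ max 1 (Real.sqrt n / 2) * r := by
        have hs : Real.sqrt n ^ 2 = n := Real.sq_sqrt (Nat.cast_nonneg n)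
        have hs0 : 0 ≤ Real.sqrt n := Real.sqrt_nonneg n
        have hm : Real.sqrt n / 2 ≤ max 1 (Real.sqrt n / 2) := le_max_right _ _
        have hM0 : (0:ℝ) ≤ max 1 (Real.sqrt n / 2) :=
          le_trans zero_le_one (le_max_left _ _)
        have hMr : 0 ≤ max 1 (Real.sqrt n / 2) * r := mul_nonneg hM0 hr0
        have hsq : ‖x - y‖ ^ 2 ≤ (max 1 (Real.sqrt n / 2) * r) ^ 2 := by
          nlinarith [hyn, mul_le_mul hm hm (by positivity) hM0]
        exact (pow_le_pow_iff_left₀ (norm_nonneg _) hMr two_ne_zero).mp hsq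
      have hdC : x - y ∈ AddSubgroup.closure
          {z : EuclideanSpace ℝ (Fin n) | z ∈ Λ ∧ ‖z‖ ≤ max 1 (Real.sqrt n / 2) * r} :=
        AddSubgroup.subset_closure ⟨hd, hdn⟩
      have : (x - y) + y = x := by abel
      rw [← this]
      exact add_mem hdC hyC
end
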